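/- Let R be an n×n matrix over F_2 in (n_r, n_m)-split reduced echelon form and M an m×n matrix over F_2 whose transpose is in reduced row echelon form with full column rank (i.e., M is in (n,0)-split echelon form). Then the product MR is in (n_r, n_m)-split reduced echelon form. -/

import Mathlib

open Matrix

/-- `A` has a leading (pivot) entry in row `i` at column `j`. -/
def IsLead {p q : ℕ} (A : Matrix (Fin p) (Fin q) (ZMod 2)) (i : Fin p) (j : Fin q) : Prop :=
  A i j ≠ 0 ∧ ∀ j' < j, A i j' = 0

/-- `A` is in row echelon form: the leading entry of each nonzero row lies strictly to the
right of the leading entry of every earlier row (in particular, zero rows are at the bottom). -/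
def IsRowEchelon {p q : ℕ} (A : Matrix (Fin p) (Fin q) (ZMod 2)) : Prop :=
  ∀ i₁ i₂ : Fin p, i₁ < i₂ → ∀ j₂ : Fin q, IsLead A i₂ j₂ → ∃ j₁ < j₂, IsLead A i₁ j₁

/-- `A` is in reduced row echelon form: row echelon form and each pivot column has a single
nonzero entry. -/
def IsRREF {p q : ℕ} (A : Matrix (Fin p) (Fin q) (ZMod 2)) : Prop :=
  _root_.IsRowEchelon A ∧ ∀ i j, IsLead A i j → ∀ i' ≠ i, A i' j = 0

/-- The left part `Mᵀ_{[n_r]}` of `M`: the transpose of its first `n_r` columns. -/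
def leftPart {m n_r n_m : ℕ} (M : Matrix (Fin m) (Fin (n_r + n_m)) (ZMod 2)) :
    Matrix (Fin n_r) (Fin m) (ZMod 2) :=
  Matrix.of fun j i => M i (Fin.castAdd n_m j)

/-- The right part `Mᵀ_{[n_r+1, n_r+n_m]}` of `M`: the transpose of its last `n_m` columns. -/
def rightPart {m n_r n_m : ℕ} (M : Matrix (Fin m) (Fin (n_r + n_m)) (ZMod 2)) :
    Matrix (Fin n_m) (Fin m) (ZMod 2) :=
  Matrix.of fun j i => M i (Fin.natAdd n_r j)

/-- `M` is in `(n_r, n_m)`-split echelon form: `M` has full column rank, its left part is in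
reduced row echelon form, its right part is in row echelon form, and every row of `M` carrying
a leading one of the left part vanishes in the right part. -/
def InSplitEchelon {m : ℕ} (n_r n_m : ℕ) (M : Matrix (Fin m) (Fin (n_r + n_m)) (ZMod 2)) :
    Prop :=
  LinearIndependent (ZMod 2) (fun j : Fin (n_r + n_m) => (fun i => M i j : Fin m → ZMod 2)) ∧
  IsRREF (leftPart M) ∧
  _root_.IsRowEchelon (rightPart M) ∧
  ∀ (l : Fin n_r) (i : Fin m), IsLead (leftPart M) l i → ∀ j : Fin n_m, rightPart M j i = 0

/-- `M` is in `(n_r, n_m)`-split reduced echelon form: split echelon form whose right part is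
also in reduced row echelon form. -/
def InSplitReducedEchelon {m : ℕ} (n_r n_m : ℕ)
    (M : Matrix (Fin m) (Fin (n_r + n_m)) (ZMod 2)) : Prop :=
  InSplitEchelon n_r n_m M ∧ IsRREF (rightPart M)

section Aux
variable {p q n m r : ℕ}

lemma isLead_unique {A : Matrix (Fin p) (Fin q) (ZMod 2)} {i : Fin p} {j j' : Fin q}
    (h : IsLead A i j) (h' : IsLead A i j') : j = j' := by
  rcases lt_trichotomy j j' with hlt | he | hgt
  · exact absurd (h'.2 j hlt) h.1
  · exact he
  · exact absurd (h.2 j' hgt) h'.1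

lemma exists_isLead {A : Matrix (Fin p) (Fin q) (ZMod 2)} {i : Fin p}
    (h : ∃ j, A i j ≠ 0) : ∃ j, IsLead A i j := by
  classical
  obtain ⟨j, hj⟩ := h
  set S : Finset (Fin q) := Finset.univ.filter (fun j => A i j ≠ 0) with hSdef
  have hS : S.Nonempty := ⟨j, by simp [hSdef, hj]⟩
  refine ⟨S.min' hS, ?_, ?_⟩
  · have := S.min'_mem hS; simpa [hSdef] using this
  · intro j' hj'
    by_contra h0
    exact absurd (S.min'_le j' (by simp [hSdef, h0])) (not_le.mpr hj')

lemma zmod2_eq_one {x : ZMod 2} (h : x ≠ 0) : x = 1 := by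
  revert h; revert x; decide

variable {V : Matrix (Fin n) (Fin m) (ZMod 2)} {piv : Fin n → Fin m}

lemma piv_strictMono (hV : IsRREF V) (hpiv : ∀ k, IsLead V k (piv k)) :
    StrictMono piv := by
  intro k₁ k₂ hk
  obtain ⟨j₁, hj₁lt, hj₁⟩ := hV.1 k₁ k₂ hk (piv k₂) (hpiv k₂)
  have := isLead_unique (hpiv k₁) hj₁
  exact this ▸ hj₁lt

lemma V_piv_eq (hV : IsRREF V) (hpiv : ∀ k, IsLead V k (piv k)) (k k' : Fin n) :
    V k' (piv k) = if k' = k then 1 else 0 := by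
  by_cases h : k' = k
  · subst h; simp [zmod2_eq_one (hpiv k').1]
  · simp [h, hV.2 k (piv k) (hpiv k) k' h]

/-- evaluating a combination of RREF rows at a pivot column gives the coefficient -/
lemma subst_apply_piv (hV : IsRREF V) (hpiv : ∀ k, IsLead V k (piv k))
    (A : Matrix (Fin r) (Fin n) (ZMod 2)) (j : Fin r) (k : Fin n) :
    (A * V) j (piv k) = A j k := by
  classical
  rw [Matrix.mul_apply]
  rw [Finset.sum_eq_single k]
  · simp [V_piv_eq hV hpiv]
  · intro k' _ hk'
    simp [V_piv_eq hV hpiv, hk']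
  · simp

lemma subst_isLead (hV : IsRREF V) (hpiv : ∀ k, IsLead V k (piv k))
    {A : Matrix (Fin r) (Fin n) (ZMod 2)} {j : Fin r} {k : Fin n}
    (h : IsLead A j k) : IsLead (A * V) j (piv k) := by
  classical
  refine ⟨by rw [subst_apply_piv hV hpiv]; exact h.1, ?_⟩
  intro i hi
  rw [Matrix.mul_apply]
  apply Finset.sum_eq_zero
  intro k' _
  rcases lt_or_ge k' k with hk' | hk'
  · simp [h.2 k' hk']
  · have : i < piv k' := lt_of_lt_of_le hi ((piv_strictMono hV hpiv).monotone hk')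
    simp [(hpiv k').2 i this]

lemma subst_isLead_rev (hV : IsRREF V) (hpiv : ∀ k, IsLead V k (piv k))
    {A : Matrix (Fin r) (Fin n) (ZMod 2)} {j : Fin r} {i : Fin m}
    (h : IsLead (A * V) j i) : ∃ k, IsLead A j k ∧ i = piv k := by
  classical
  have hne : ∃ k, A j k ≠ 0 := by
    by_contra h0
    push_neg at h0
    apply h.1
    rw [Matrix.mul_apply]
    exact Finset.sum_eq_zero fun k _ => by simp [h0 k]
  obtain ⟨k₀, hk₀⟩ := exists_isLead hne
  exact ⟨k₀, hk₀, isLead_unique h (subst_isLead hV hpiv hk₀)⟩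

lemma subst_rowEchelon (hV : IsRREF V) (hpiv : ∀ k, IsLead V k (piv k))
    {A : Matrix (Fin r) (Fin n) (ZMod 2)} (hA : _root_.IsRowEchelon A) :
    _root_.IsRowEchelon (A * V) := by
  intro i₁ i₂ hi j₂ hj₂
  obtain ⟨k₂, hk₂, rfl⟩ := subst_isLead_rev hV hpiv hj₂
  obtain ⟨k₁, hk₁lt, hk₁⟩ := hA i₁ i₂ hi k₂ hk₂
  exact ⟨piv k₁, piv_strictMono hV hpiv hk₁lt, subst_isLead hV hpiv hk₁⟩

lemma subst_isRREF (hV : IsRREF V) (hpiv : ∀ k, IsLead V k (piv k))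
    {A : Matrix (Fin r) (Fin n) (ZMod 2)} (hA : IsRREF A) :
    IsRREF (A * V) := by
  refine ⟨subst_rowEchelon hV hpiv hA.1, ?_⟩
  intro i j hij i' hi'
  obtain ⟨k, hk, rfl⟩ := subst_isLead_rev hV hpiv hij
  rw [subst_apply_piv hV hpiv]
  exact hA.2 i k hk i' hi'
end Aux

/-- If `R` (square, `n = n_r + n_m`) is in `(n_r, n_m)`-split reduced echelon form and `M` is
an `m×n` matrix in `(n, 0)`-split echelon form (i.e. `Mᵀ` is in reduced row echelon form and
`M` has full column rank), then `M * R` is in `(n_r, n_m)`-split reduced echelon form. -/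
theorem mul_split_reduced_echelon (n_r n_m m : ℕ)
    (R : Matrix (Fin (n_r + n_m)) (Fin (n_r + n_m)) (ZMod 2))
    (M : Matrix (Fin m) (Fin (n_r + n_m)) (ZMod 2))
    (hR : InSplitReducedEchelon n_r n_m R)
    (hM₁ : IsRREF Mᵀ)
    (hM₂ : LinearIndependent (ZMod 2)
      (fun j : Fin (n_r + n_m) => (fun i => M i j : Fin m → ZMod 2))) :
    InSplitReducedEchelon n_r n_m (M * R) := by
  classical
  obtain ⟨⟨hRind, hRleft, hRright, hRcross⟩, hRr⟩ := hR
  have hrow : ∀ k : Fin (n_r + n_m), ∃ i, Mᵀ k i ≠ 0 := by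
    intro k
    have h0 := hM₂.ne_zero k
    rw [Function.ne_iff] at h0
    obtain ⟨i, hi⟩ := h0
    exact ⟨i, hi⟩
  choose piv hpiv using fun k => exists_isLead (hrow k)
  have hLP : leftPart (M * R) = leftPart R * Mᵀ := by
    ext j i
    simp only [leftPart, Matrix.of_apply, Matrix.mul_apply, Matrix.transpose_apply]
    exact Finset.sum_congr rfl fun k _ => mul_comm _ _
  have hRP : rightPart (M * R) = rightPart R * Mᵀ := by
    ext j i
    simp only [rightPart, Matrix.of_apply, Matrix.mul_apply, Matrix.transpose_apply]
    exact Finset.sum_congr rfl fun k _ => mul_comm _ _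
  refine ⟨⟨?_, ?_, ?_, ?_⟩, ?_⟩
  · rw [Fintype.linearIndependent_iff] at hRind hM₂ ⊢
    intro g hg
    have hg' : ∀ i, ∑ j, g j * (M * R) i j = 0 := by
      intro i
      have := congrFun hg i
      simpa [Finset.sum_apply] using this
    have hc : ∀ k, (∑ j, g j * R k j) = 0 := by
      apply hM₂
      funext i
      simp only [Finset.sum_apply, Pi.smul_apply, smul_eq_mul, Pi.zero_apply]
      rw [← hg' i]
      simp only [Matrix.mul_apply, Finset.sum_mul, Finset.mul_sum]
      rw [Finset.sum_comm]
      exact Finset.sum_congr rfl fun j _ => Finset.sum_congr rfl fun k _ => by ring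
    apply hRind
    funext k
    simp only [Finset.sum_apply, Pi.smul_apply, smul_eq_mul, Pi.zero_apply]
    exact hc k
  · rw [hLP]; exact subst_isRREF hM₁ hpiv hRleft
  · rw [hRP]; exact subst_rowEchelon hM₁ hpiv hRright
  · intro l i hl j
    rw [hLP] at hl
    obtain ⟨k, hk, rfl⟩ := subst_isLead_rev hM₁ hpiv hl
    rw [hRP, subst_apply_piv hM₁ hpiv]
    exact hRcross l k hk j
  · rw [hRP]; exact subst_isRREF hM₁ hpiv hRr
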